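/- Every pb-generic real is integer-valued random, and moreover partial integer-valued random; that is, no computable integer-valued martingale and no partial computable integer-valued martingale succeeds on a pb-generic real. -/

import Mathlib

namespace IVR

/-! ### Finite binary strings and infinite binary sequences -/

/-- The length-`n` prefix of an infinite binary sequence `X`, as a finite binary string. -/
def str (X : ℕ → Bool) (n : ℕ) : List Bool := (List.range n).map X

/-- A standard encoding of the rationals into the natural numbers
(used to express computability of rational-valued functions). -/
def qenc (q : ℚ) : ℕ := Nat.pair (Encodable.encode q.num) q.den

/-! ### Martingales -/

/-- A (total) martingale: a nonnegative function on binary strings satisfying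
the fairness condition `f σ = (f (σ0) + f (σ1))/2`. -/
structure Martingale where
  toFun : List Bool → ℚ
  nonneg : ∀ σ, 0 ≤ toFun σ
  fair : ∀ σ : List Bool, toFun σ = (toFun (σ ++ [false]) + toFun (σ ++ [true])) / 2

/-- A martingale is integer-valued if each bet is an integer amount:
`f (σi) = f σ ± k` for some natural number `k`. -/
def Martingale.IntegerValued (f : Martingale) : Prop :=
  ∀ σ b, ∃ k : ℕ, f.toFun (σ ++ [b]) = f.toFun σ + k ∨ f.toFun (σ ++ [b]) = f.toFun σ - k

/-- Computability of a martingale. -/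
def Martingale.Comp (f : Martingale) : Prop := Computable fun σ => qenc (f.toFun σ)

/-- A martingale succeeds on `X` if `limsup_n f (X↾n) = ∞`. -/
def Martingale.Succeeds (f : Martingale) (X : ℕ → Bool) : Prop :=
  ∀ c : ℚ, ∀ m : ℕ, ∃ n, m ≤ n ∧ c < f.toFun (str X n)

/-- `X` is integer-valued random if no computable integer-valued martingale succeeds on it. -/
def IVRandom (X : ℕ → Bool) : Prop :=
  ∀ f : Martingale, f.IntegerValued → f.Comp → ¬ f.Succeeds X

/-- A partial martingale: a partial function on binary strings whose domain is
closed under prefixes and which satisfies the fairness condition wherever defined. -/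
structure PartialMartingale where
  toFun : List Bool →. ℚ
  nonneg : ∀ σ q, q ∈ toFun σ → 0 ≤ q
  domClosed : ∀ σ τ : List Bool, σ <+: τ → (toFun τ).Dom → (toFun σ).Dom
  siblings : ∀ σ b, (toFun (σ ++ [b])).Dom → (toFun (σ ++ [!b])).Dom
  fair : ∀ σ q0 q1, q0 ∈ toFun (σ ++ [false]) → q1 ∈ toFun (σ ++ [true]) →
    ((q0 + q1) / 2) ∈ toFun σ

/-- A partial martingale is integer-valued if each bet is an integer amount. -/
def PartialMartingale.IntegerValued (m : PartialMartingale) : Prop :=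
  ∀ σ b q q', q ∈ m.toFun σ → q' ∈ m.toFun (σ ++ [b]) →
    ∃ k : ℕ, q' = q + k ∨ q' = q - k

/-- Partial computability of a partial martingale. -/
def PartialMartingale.Comp (m : PartialMartingale) : Prop :=
  Partrec fun σ => (m.toFun σ).map qenc

/-- A partial martingale succeeds on `X` if `limsup_n m (X↾n) = ∞`. -/
def PartialMartingale.Succeeds (m : PartialMartingale) (X : ℕ → Bool) : Prop :=
  ∀ c : ℚ, ∀ k : ℕ, ∃ n, k ≤ n ∧ ∃ q ∈ m.toFun (str X n), c < q

/-- `X` is partial integer-valued random if no partial computable integer-valued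
martingale succeeds on it. -/
def PartialIVRandom (X : ℕ → Bool) : Prop :=
  ∀ m : PartialMartingale, m.IntegerValued → m.Comp → ¬ m.Succeeds X

/-! ### Oracle computability, Turing reducibility, the jump -/

/-- Codes for partial functions computable relative to an oracle
(Kleene-style, following `Nat.Partrec.Code` with an extra `oracle` constructor). -/
inductive OCode : Type
  | zero
  | succ
  | left
  | right
  | oracle
  | pair (cf cg : OCode)
  | comp (cf cg : OCode)
  | prec (cf cg : OCode)
  | rfind' (cf : OCode)

/-- Evaluation of an oracle code relative to a (partial) oracle `O`. -/
def OCode.eval (O : ℕ →. ℕ) : OCode → ℕ →. ℕ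
  | .zero => fun _ => Part.some 0
  | .succ => fun n => Part.some (n + 1)
  | .left => fun n => Part.some n.unpair.1
  | .right => fun n => Part.some n.unpair.2
  | .oracle => O
  | .pair cf cg => fun n => Nat.pair <$> OCode.eval O cf n <*> OCode.eval O cg n
  | .comp cf cg => fun n => OCode.eval O cg n >>= OCode.eval O cf
  | .prec cf cg =>
    Nat.unpaired fun a n =>
      n.rec (OCode.eval O cf a) fun y IH => do
        let i ← IH
        OCode.eval O cg (Nat.pair a (Nat.pair y i))
  | .rfind' cf =>
    Nat.unpaired fun a m =>
      (Nat.rfind fun n => (fun x => x = 0) <$> OCode.eval O cf (Nat.pair a (n + m))).map (· + m)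

/-- A numbering of the oracle codes. -/
def OCode.ofNat : ℕ → OCode
  | 0 => .zero
  | 1 => .succ
  | 2 => .left
  | 3 => .right
  | 4 => .oracle
  | n + 5 =>
    let m := n.div2.div2
    have hm : m < n + 5 := by
      simp only [m, Nat.div2_val]
      exact lt_of_le_of_lt (le_trans (Nat.div_le_self _ _) (Nat.div_le_self _ _)) (by omega)
    have _m1 : m.unpair.1 < n + 5 := lt_of_le_of_lt m.unpair_left_le hm
    have _m2 : m.unpair.2 < n + 5 := lt_of_le_of_lt m.unpair_right_le hm
    match n.bodd, n.div2.bodd with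
    | false, false => .pair (OCode.ofNat m.unpair.1) (OCode.ofNat m.unpair.2)
    | false, true  => .comp (OCode.ofNat m.unpair.1) (OCode.ofNat m.unpair.2)
    | true , false => .prec (OCode.ofNat m.unpair.1) (OCode.ofNat m.unpair.2)
    | true , true  => .rfind' (OCode.ofNat m)
decreasing_by
  all_goals (try simp_wf)
  all_goals (try simp only [m] at _m1 _m2 hm)
  all_goals omega

/-- The characteristic function of a set of naturals / infinite binary sequence. -/
def charFn (A : ℕ → Bool) : ℕ →. ℕ := fun n => Part.some (cond (A n) 1 0)

/-- `f` is partial computable relative to the oracle `O`. -/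
def RecIn (f : ℕ →. ℕ) (O : ℕ →. ℕ) : Prop := ∃ c : OCode, OCode.eval O c = f

/-- Turing reducibility. -/
def TLE (A B : ℕ → Bool) : Prop := RecIn (charFn A) (charFn B)

/-- Turing equivalence. -/
def TEquiv (A B : ℕ → Bool) : Prop := TLE A B ∧ TLE B A

/-- A function `g : ℕ → ℕ` is computable from `A`. -/
def FnTLE (g : ℕ → ℕ) (A : ℕ → Bool) : Prop := RecIn (fun n => Part.some (g n)) (charFn A)

/-- The Turing jump of `A`: the halting problem relative to `A`. -/
noncomputable def jump (A : ℕ → Bool) : ℕ → Bool := fun e =>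
  @decide ((OCode.eval (charFn A) (OCode.ofNat e) e).Dom) (Classical.propDecidable _)

/-- The empty set. -/
def emptySet : ℕ → Bool := fun _ => false

/-- The halting problem `∅'`. -/
noncomputable def K : ℕ → Bool := jump emptySet

/-- `∅''`. -/
noncomputable def K2 : ℕ → Bool := jump K

/-- `∅'''`. -/
noncomputable def K3 : ℕ → Bool := jump K2

/-- Weak truth table reducibility: `A` is Turing reducible to `B` via a reduction
whose use is bounded by a computable function `u` -- the computation on input `n`
only depends on the first `u n` bits of the oracle. -/
def WttLE (A B : ℕ → Bool) : Prop :=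
  ∃ (c : OCode) (u : ℕ → ℕ), Computable u ∧
    ∀ (n : ℕ) (B' : ℕ → Bool), (∀ k < u n, B' k = B k) →
      OCode.eval (charFn B') c n = Part.some (cond (A n) 1 0)

/-- Weak truth table equivalence. -/
def WttEquiv (A B : ℕ → Bool) : Prop := WttLE A B ∧ WttLE B A

/-- Weak truth table reducibility of a function `f : ℕ → ℕ` to a set `B`. -/
def FnWttLE (f : ℕ → ℕ) (B : ℕ → Bool) : Prop :=
  ∃ (c : OCode) (u : ℕ → ℕ), Computable u ∧
    ∀ (n : ℕ) (B' : ℕ → Bool), (∀ k < u n, B' k = B k) →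
      OCode.eval (charFn B') c n = Part.some (f n)

/-- `A` has array noncomputable Turing degree: for every `f ≤wtt ∅'` there is an
`A`-computable function `g` with `g n > f n` for infinitely many `n`. -/
def ArrayNoncomputable (A : ℕ → Bool) : Prop :=
  ∀ f : ℕ → ℕ, FnWttLE f K → ∃ g : ℕ → ℕ, FnTLE g A ∧ ∀ m, ∃ n, m ≤ n ∧ f n < g n

/-- `A` is computably enumerable. -/
def CE (A : ℕ → Bool) : Prop :=
  ∃ f : ℕ →. ℕ, Nat.Partrec f ∧ ∀ n, A n = true ↔ (f n).Dom

/-- `S` is computably enumerable relative to `O`. -/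
def CEIn (S : ℕ → Bool) (O : ℕ → Bool) : Prop :=
  ∃ f : ℕ →. ℕ, RecIn f (charFn O) ∧ ∀ n, S n = true ↔ (f n).Dom

/-- `A` has high Turing degree: the jump of `A` computes `∅''`. -/
def High (A : ℕ → Bool) : Prop := TLE K2 (jump A)

/-- `A` has high₂ Turing degree: the double jump of `A` computes `∅'''`. -/
def High2 (A : ℕ → Bool) : Prop := TLE K3 (jump (jump A))

/-- `A` has low Turing degree: the jump of `A` is Turing equivalent to `∅'`. -/
def Low (A : ℕ → Bool) : Prop := TEquiv (jump A) K

/-! ### Left-c.e. reals -/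

/-- The real number with binary expansion `X`. -/
noncomputable def binaryVal (X : ℕ → Bool) : ℝ :=
  ∑' n, cond (X n) ((2 : ℝ)⁻¹ ^ (n + 1)) 0

/-- `X` is a left-c.e. real: the limit of a computable increasing sequence of rationals. -/
def LeftCE (X : ℕ → Bool) : Prop :=
  ∃ q : ℕ → ℚ, Computable (fun n => qenc (q n)) ∧ (∀ n, q n ≤ q (n + 1)) ∧
    Filter.Tendsto (fun n => (q n : ℝ)) Filter.atTop (nhds (binaryVal X))

/-! ### Genericity -/

/-- A set of strings `S` is pb-dense: it contains the range of a function
`f` with `f σ ⊒ σ` which has a computable approximation whose number of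
mind-changes on `σ` is bounded by a primitive recursive function `h`. -/
def PbDense (S : Set (List Bool)) : Prop :=
  ∃ (f : List Bool → List Bool) (F : ℕ → List Bool → List Bool) (h : List Bool → ℕ),
    Computable₂ F ∧ Primrec h ∧
    (∀ σ, σ <+: f σ) ∧
    (∀ σ, ∃ s₀, ∀ s, s₀ ≤ s → F s σ = f σ) ∧
    (∀ σ, {s : ℕ | F (s + 1) σ ≠ F s σ}.Finite ∧
      {s : ℕ | F (s + 1) σ ≠ F s σ}.ncard ≤ h σ) ∧
    (∀ σ, f σ ∈ S)

/-- `X` is pb-generic: it has a prefix in every pb-dense set of strings. -/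
def PbGeneric (X : ℕ → Bool) : Prop :=
  ∀ S : Set (List Bool), PbDense S → ∃ n, str X n ∈ S

/-- A computably enumerable set of strings. -/
def CEStrings (W : Set (List Bool)) : Prop :=
  ∃ f : List Bool →. ℕ, Partrec f ∧ ∀ σ, σ ∈ W ↔ (f σ).Dom

/-- `X` is 1-generic: for every c.e. set of strings `W`, either `X` has a prefix
in `W`, or `X` has a prefix no extension of which lies in `W`. -/
def OneGeneric (X : ℕ → Bool) : Prop :=
  ∀ W : Set (List Bool), CEStrings W →
    (∃ n, str X n ∈ W) ∨ (∃ n, ∀ τ : List Bool, str X n <+: τ → τ ∉ W)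


lemma encode_int_coe_nat (n : ℕ) : Encodable.encode (n : ℤ) = 2 * n := by
  show Encodable.encode (Int.ofNat n) = 2 * n
  rfl

section Machinery

open Encodable Nat.Partrec.Code
open Nat.Partrec (Code)

/-- integer-compare of two `qenc`-codes of nonnegative rationals -/
def rltN (a b : ℕ) : Bool := decide (a.unpair.1 / 2 * b.unpair.2 < b.unpair.1 / 2 * a.unpair.2)

def convB (c : Code) (s e : ℕ) : Bool := decide (e ≤ s) && (evaln s c e).isSome

def cstg (c : Code) (s e : ℕ) : ℕ :=
  (List.range (s + 1)).foldr (fun t acc => bif convB c t e then t else acc) s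

def vcode (c : Code) (s e : ℕ) : ℕ := (evaln s c e).getD 0

def takeL (k : ℕ) (l : List Bool) : List Bool :=
  (l.foldl (fun st x => bif st.2 == 0 then st else (st.1 ++ [x], st.2 - 1))
    (([] : List Bool), k)).1

def prefB (σ τ : List Bool) : Bool := decide (takeL σ.length τ = σ)

def stepF (c : Code) (s : ℕ) (σ : List Bool) (st : List Bool × ℕ × ℕ) (i : ℕ) :
    List Bool × ℕ × ℕ :=
  Option.casesOn (Encodable.decode (α := List Bool) i) st fun τ =>
    bif prefB σ τ && convB c s (Encodable.encode τ) then
      bif rltN (vcode c s (Encodable.encode τ)) st.2.1 ||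
          (vcode c s (Encodable.encode τ) == st.2.1 &&
            (decide (cstg c s (Encodable.encode τ) < st.2.2) ||
              (cstg c s (Encodable.encode τ) == st.2.2 &&
                decide (Encodable.encode τ < Encodable.encode st.1)))) then
        (τ, vcode c s (Encodable.encode τ), cstg c s (Encodable.encode τ))
      else st
    else st

def Fapp (c : Code) (s : ℕ) (σ : List Bool) : List Bool :=
  bif convB c s (Encodable.encode σ) then
    ((List.range (s + 1)).foldl (stepF c s σ)
      (σ, vcode c s (Encodable.encode σ), cstg c s (Encodable.encode σ))).1
  else σ

lemma primrec_rltN : Primrec₂ rltN := by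
  unfold rltN
  have u1 : Primrec fun p : ℕ × ℕ => p.1.unpair.1 / 2 * p.2.unpair.2 :=
    Primrec.nat_mul.comp
      (Primrec.nat_div.comp (Primrec.fst.comp (Primrec.unpair.comp Primrec.fst))
        (Primrec.const 2))
      (Primrec.snd.comp (Primrec.unpair.comp Primrec.snd))
  have u2 : Primrec fun p : ℕ × ℕ => p.2.unpair.1 / 2 * p.1.unpair.2 :=
    Primrec.nat_mul.comp
      (Primrec.nat_div.comp (Primrec.fst.comp (Primrec.unpair.comp Primrec.snd))
        (Primrec.const 2))
      (Primrec.snd.comp (Primrec.unpair.comp Primrec.fst))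
  exact (Primrec.nat_lt.comp u1 u2).decide

lemma primrec_evaln (c : Code) : Primrec₂ fun s e => evaln s c e :=
  Nat.Partrec.Code.primrec_evaln.comp (Primrec.pair (Primrec.pair Primrec.fst (Primrec.const c)) Primrec.snd)

lemma primrec_convB (c : Code) : Primrec₂ (convB c) :=
  (Primrec.dom_bool₂ (· && ·)).comp (Primrec.nat_le.comp Primrec.snd Primrec.fst).decide
    (Primrec.option_isSome.comp (primrec_evaln c))

lemma primrec_vcode (c : Code) : Primrec₂ (vcode c) :=
  Primrec.option_getD.comp (primrec_evaln c) (Primrec.const 0)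

lemma primrec_cstg (c : Code) : Primrec₂ (cstg c) := by
  unfold cstg
  exact Primrec.list_foldr
    (Primrec.list_range.comp (Primrec.succ.comp Primrec.fst))
    Primrec.fst
    (Primrec.to₂ (Primrec.cond
      ((primrec_convB c).comp (Primrec.fst.comp Primrec.snd) (Primrec.snd.comp Primrec.fst))
      (Primrec.fst.comp Primrec.snd) (Primrec.snd.comp Primrec.snd)))

lemma primrec_takeL : Primrec₂ takeL := by
  unfold takeL
  have hstep : Primrec₂ fun (_ : ℕ × List Bool) (p : (List Bool × ℕ) × Bool) =>
      bif p.1.2 == 0 then p.1 else (p.1.1 ++ [p.2], p.1.2 - 1) := by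
    unfold Primrec₂
    apply Primrec.cond
    · exact Primrec.beq.comp (Primrec.snd.comp (Primrec.fst.comp Primrec.snd)) (Primrec.const 0)
    · exact Primrec.fst.comp Primrec.snd
    · exact Primrec.pair
        (Primrec.list_concat.comp (Primrec.fst.comp (Primrec.fst.comp Primrec.snd))
          (Primrec.snd.comp Primrec.snd))
        (Primrec.nat_sub.comp (Primrec.snd.comp (Primrec.fst.comp Primrec.snd)) (Primrec.const 1))
  have := Primrec.list_foldl (α := ℕ × List Bool)
    (f := fun p => p.2) (g := fun p => (([] : List Bool), p.1))
    Primrec.snd (Primrec.pair (Primrec.const ([] : List Bool)) Primrec.fst) hstep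
  exact Primrec.fst.comp this

lemma primrec_prefB : Primrec₂ prefB := by
  unfold prefB
  exact (Primrec.eq.comp (primrec_takeL.comp (Primrec.list_length.comp Primrec.fst) Primrec.snd)
    Primrec.fst).decide

lemma primrec_stepF (c : Code) :
    Primrec₂ fun (a : ℕ × List Bool) (p : (List Bool × ℕ × ℕ) × ℕ) =>
      stepF c a.1 a.2 p.1 p.2 := by
  unfold stepF
  unfold Primrec₂
  -- argument : (ℕ × List Bool) × ((List Bool × ℕ × ℕ) × ℕ)
  set β := (ℕ × List Bool) × ((List Bool × ℕ × ℕ) × ℕ)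
  have hs : Primrec fun x : β => x.1.1 := Primrec.fst.comp Primrec.fst
  have hσ : Primrec fun x : β => x.1.2 := Primrec.snd.comp Primrec.fst
  have hst : Primrec fun x : β => x.2.1 := Primrec.fst.comp Primrec.snd
  have hi : Primrec fun x : β => x.2.2 := Primrec.snd.comp Primrec.snd
  apply Primrec.option_casesOn (ho := Primrec.decode.comp hi) (hf := hst)
  unfold Primrec₂
  have hx : Primrec fun y : β × List Bool => y.1 := Primrec.fst
  have hτ : Primrec fun y : β × List Bool => y.2 := Primrec.snd
  have hs' : Primrec fun y : β × List Bool => y.1.1.1 := hs.comp hx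
  have hσ' : Primrec fun y : β × List Bool => y.1.1.2 := hσ.comp hx
  have hst' : Primrec fun y : β × List Bool => y.1.2.1 := hst.comp hx
  have heτ : Primrec fun y : β × List Bool => Encodable.encode y.2 := Primrec.encode.comp hτ
  have hv : Primrec fun y : β × List Bool => vcode c y.1.1.1 (Encodable.encode y.2) :=
    (primrec_vcode c).comp hs' heτ
  have hcs : Primrec fun y : β × List Bool => cstg c y.1.1.1 (Encodable.encode y.2) :=
    (primrec_cstg c).comp hs' heτ
  have hbv : Primrec fun y : β × List Bool => y.1.2.1.2.1 :=
    Primrec.fst.comp (Primrec.snd.comp hst')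
  have hbt : Primrec fun y : β × List Bool => y.1.2.1.2.2 :=
    Primrec.snd.comp (Primrec.snd.comp hst')
  have hbl : Primrec fun y : β × List Bool => Encodable.encode y.1.2.1.1 :=
    Primrec.encode.comp (Primrec.fst.comp hst')
  apply Primrec.cond
  · exact (Primrec.dom_bool₂ (· && ·)).comp (primrec_prefB.comp hσ' hτ)
      ((primrec_convB c).comp hs' heτ)
  · apply Primrec.cond
    · apply (Primrec.dom_bool₂ (· || ·)).comp
      · exact primrec_rltN.comp hv hbv
      · apply (Primrec.dom_bool₂ (· && ·)).comp
        · exact Primrec.beq.comp hv hbv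
        · apply (Primrec.dom_bool₂ (· || ·)).comp
          · exact (Primrec.nat_lt.comp hcs hbt).decide
          · exact (Primrec.dom_bool₂ (· && ·)).comp (Primrec.beq.comp hcs hbt)
              (Primrec.nat_lt.comp heτ hbl).decide
    · exact Primrec.pair hτ (Primrec.pair hv hcs)
    · exact hst'
  · exact hst'

lemma primrec_Fapp (c : Code) : Primrec₂ (Fapp c) := by
  unfold Fapp
  unfold Primrec₂
  have hs : Primrec fun a : ℕ × List Bool => a.1 := Primrec.fst
  have hσ : Primrec fun a : ℕ × List Bool => a.2 := Primrec.snd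
  have he : Primrec fun a : ℕ × List Bool => Encodable.encode a.2 := Primrec.encode.comp hσ
  apply Primrec.cond ((primrec_convB c).comp hs he)
  · apply Primrec.fst.comp
    exact Primrec.list_foldl (Primrec.list_range.comp (Primrec.succ.comp hs))
      (Primrec.pair hσ (Primrec.pair ((primrec_vcode c).comp hs he) ((primrec_cstg c).comp hs he)))
      (primrec_stepF c)
  · exact hσ

end Machinery

end IVR

namespace IVR
section Basic
open Encodable Nat.Partrec.Code
open Nat.Partrec (Code)

lemma str_succ (X : ℕ → Bool) (n : ℕ) : str X (n + 1) = str X n ++ [X n] := by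
  simp [str, List.range_succ]

lemma str_prefix (X : ℕ → Bool) {m n : ℕ} (h : m ≤ n) : str X m <+: str X n := by
  induction n, h using Nat.le_induction with
  | base => exact List.prefix_refl _
  | succ n hmn ih => exact ih.trans (by rw [str_succ]; exact List.prefix_append _ _)

lemma qenc_inj : Function.Injective qenc := by
  intro q r h
  unfold qenc at h
  rw [Nat.pair_eq_pair] at h
  exact Rat.ext (Encodable.encode_injective h.1) h.2

lemma rat_lt_iff (q r : ℚ) : q < r ↔ q.num * (r.den : ℤ) < r.num * (q.den : ℤ) := by
  nth_rewrite 1 [← Rat.num_div_den q, ← Rat.num_div_den r]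
  rw [div_lt_div_iff₀ (by exact_mod_cast q.pos) (by exact_mod_cast r.pos)]
  exact_mod_cast Iff.rfl

lemma qenc_unpair1 {q : ℚ} (hq : 0 ≤ q) : (qenc q).unpair.1 / 2 = q.num.toNat := by
  have : q.num = (q.num.toNat : ℤ) := (Int.toNat_of_nonneg (Rat.num_nonneg.2 hq)).symm
  rw [qenc, Nat.unpair_pair]
  rw [this, encode_int_coe_nat]
  omega

lemma qenc_unpair2 (q : ℚ) : (qenc q).unpair.2 = q.den := by
  rw [qenc, Nat.unpair_pair]

lemma rltN_qenc {q r : ℚ} (hq : 0 ≤ q) (hr : 0 ≤ r) :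
    rltN (qenc q) (qenc r) = true ↔ q < r := by
  unfold rltN
  rw [decide_eq_true_iff, qenc_unpair1 hq, qenc_unpair1 hr, qenc_unpair2, qenc_unpair2,
    rat_lt_iff]
  have h1 : q.num = (q.num.toNat : ℤ) := (Int.toNat_of_nonneg (Rat.num_nonneg.2 hq)).symm
  have h2 : r.num = (r.num.toNat : ℤ) := (Int.toNat_of_nonneg (Rat.num_nonneg.2 hr)).symm
  rw [h1, h2]
  exact_mod_cast Iff.rfl

lemma takeL_eq (k : ℕ) (l : List Bool) : takeL k l = l.take k := by
  suffices h : ∀ (l : List Bool) (acc : List Bool) (k : ℕ),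
      (l.foldl (fun st x => bif st.2 == 0 then st else (st.1 ++ [x], st.2 - 1)) (acc, k)).1
        = acc ++ l.take k by
    simpa [takeL] using h l [] k
  intro l
  induction l with
  | nil => simp
  | cons x l ih =>
    intro acc k
    cases k with
    | zero =>
      suffices h0 : ∀ (l' : List Bool) (acc' : List Bool),
          (l'.foldl (fun st x => bif st.2 == 0 then st else (st.1 ++ [x], st.2 - 1))
            (acc', 0)).1 = acc' by
        simpa using h0 (x :: l) acc
      intro l'
      induction l' with
      | nil => simp
      | cons y l' ih' => intro acc'; simpa using ih' acc'
    | succ j => simpa using ih (acc ++ [x]) j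

lemma prefB_iff (σ τ : List Bool) : prefB σ τ = true ↔ σ <+: τ := by
  rw [prefB, decide_eq_true_iff, takeL_eq]
  rw [List.prefix_iff_eq_take]
  exact eq_comm

lemma convB_mono {c : Code} {s s' e : ℕ} (h : s ≤ s') (hc : convB c s e = true) :
    convB c s' e = true := by
  unfold convB at *
  simp only [Bool.and_eq_true, decide_eq_true_eq, Option.isSome_iff_exists] at *
  obtain ⟨h1, x, hx⟩ := hc
  exact ⟨h1.trans h, x, evaln_mono h hx⟩

/-- the foldr in `cstg` computes the least `t < n` satisfying `p`, else the default. -/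
lemma foldr_least (p : ℕ → Bool) (n d : ℕ) :
    ((∀ t < n, p t = false) ∧
      (List.range n).foldr (fun t acc => bif p t then t else acc) d = d) ∨
    (∃ t0, t0 < n ∧ p t0 = true ∧ (∀ j < t0, p j = false) ∧
      (List.range n).foldr (fun t acc => bif p t then t else acc) d = t0) := by
  induction n generalizing d with
  | zero => left; simp
  | succ n ih =>
    rw [List.range_succ, List.foldr_append]
    simp only [List.foldr_cons, List.foldr_nil]
    rcases ih (bif p n then n else d) with ⟨h1, h2⟩ | ⟨t0, ht0, hp, hj, he⟩
    · cases hpn : p n with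
      | true =>
        right
        refine ⟨n, Nat.lt_succ_self n, hpn, h1, ?_⟩
        rw [hpn] at h2; simpa using h2
      | false =>
        left
        refine ⟨fun t ht => ?_, by rw [hpn] at h2; simpa using h2⟩
        rcases Nat.lt_succ_iff_lt_or_eq.1 ht with h | h
        · exact h1 t h
        · rw [h]; exact hpn
    · right
      exact ⟨t0, ht0.trans (Nat.lt_succ_self n), hp, hj, he⟩

lemma cstg_spec {c : Code} {s e : ℕ} (h : convB c s e = true) :
    cstg c s e < s + 1 ∧ convB c (cstg c s e) e = true ∧
      ∀ j < cstg c s e, convB c j e = false := by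
  rcases foldr_least (fun t => convB c t e) (s + 1) s with ⟨h1, _⟩ | ⟨t0, ht0, hp, hj, he⟩
  · have := h1 s (Nat.lt_succ_self s); rw [h] at this; exact absurd this (by simp)
  · rw [cstg, he]; exact ⟨ht0, hp, hj⟩

/-- `cstg` is independent of the stage, once converged. -/
lemma cstg_stage_eq {c : Code} {s s' e : ℕ} (h : convB c s e = true)
    (h' : convB c s' e = true) : cstg c s e = cstg c s' e := by
  obtain ⟨_, hp, hj⟩ := cstg_spec h
  obtain ⟨_, hp', hj'⟩ := cstg_spec h'
  rcases Nat.lt_trichotomy (cstg c s e) (cstg c s' e) with hlt | heq | hgt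
  · exact absurd hp (by simp [hj' _ hlt])
  · exact heq
  · exact absurd hp' (by simp [hj _ hgt])

lemma cstg_le {c : Code} {s e : ℕ} (h : convB c s e = true) : cstg c s e ≤ s :=
  Nat.lt_succ_iff.1 (cstg_spec h).1

end Basic

/-! ### Martingale structural lemmas -/

section MGale

lemma pm_int_diff {m : PartialMartingale} (hIV : m.IntegerValued) :
    ∀ (l σ : List Bool) (q q' : ℚ), q ∈ m.toFun σ → q' ∈ m.toFun (σ ++ l) →
      ∃ z : ℤ, q' = q + z := by
  intro l
  induction l using List.reverseRecOn with
  | nil =>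
    intro σ q q' h h'
    rw [List.append_nil] at h'
    exact ⟨0, by rw [Part.mem_unique h' h]; push_cast; ring⟩
  | append_singleton l b ih =>
    intro σ q q' h h'
    rw [← List.append_assoc] at h'
    have hd : (m.toFun (σ ++ l)).Dom :=
      m.domClosed _ _ (List.prefix_append _ _) (Part.dom_iff_mem.mpr ⟨q', h'⟩)
    have hm : (m.toFun (σ ++ l)).get hd ∈ m.toFun (σ ++ l) := Part.get_mem hd
    obtain ⟨z, hz⟩ := ih σ q _ h hm
    obtain ⟨k, hk | hk⟩ := hIV (σ ++ l) b _ _ hm h'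
    · exact ⟨z + k, by rw [hk, hz]; push_cast; ring⟩
    · exact ⟨z - k, by rw [hk, hz]; push_cast; ring⟩

lemma pm_bound {m : PartialMartingale} {q0 : ℚ} (hq0 : q0 ∈ m.toFun []) :
    ∀ (σ : List Bool) (q : ℚ), q ∈ m.toFun σ → q ≤ 2 ^ σ.length * q0 := by
  intro σ
  induction σ using List.reverseRecOn with
  | nil => intro q h; simpa using le_of_eq (Part.mem_unique h hq0)
  | append_singleton l b ih =>
    intro q h
    have hdl : (m.toFun (l ++ [b])).Dom := Part.dom_iff_mem.mpr ⟨q, h⟩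
    have hd : (m.toFun l).Dom := m.domClosed l (l ++ [b]) (List.prefix_append _ _) hdl
    have hqpm : (m.toFun l).get hd ∈ m.toFun l := Part.get_mem hd
    set qp := (m.toFun l).get hd with hqp
    have hsib : (m.toFun (l ++ [!b])).Dom := m.siblings l b hdl
    have hqs : (m.toFun (l ++ [!b])).get hsib ∈ m.toFun (l ++ [!b]) := Part.get_mem hsib
    set qs := (m.toFun (l ++ [!b])).get hsib with hqsd
    have hfair : q + qs = 2 * qp := by
      cases b with
      | false =>
        have h2 := m.fair l q qs h (by simpa using hqs)
        have h3 := Part.mem_unique h2 hqpm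
        linarith
      | true =>
        have h2 := m.fair l qs q (by simpa using hqs) h
        have h3 := Part.mem_unique h2 hqpm
        linarith
    have hq : q ≤ 2 * qp := by have := m.nonneg _ _ hqs; linarith
    have hb := ih qp hqpm
    have h2 : (0:ℚ) ≤ 2 := by norm_num
    calc q ≤ 2 * qp := hq
      _ ≤ 2 * (2 ^ l.length * q0) := by linarith
      _ = 2 ^ (l ++ [b]).length * q0 := by
          rw [List.length_append]
          simp [pow_succ]
          ring

end MGale

/-! ### Semantics of the approximation machinery -/

section Construction

open Encodable Nat.Partrec.Code
open Nat.Partrec (Code)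
open scoped Classical

/-- the value of a partial martingale, defaulting to `0` off its domain. -/
noncomputable def mval (m : PartialMartingale) (σ : List Bool) : ℚ :=
  if h : (m.toFun σ).Dom then (m.toFun σ).get h else 0

lemma mval_mem {m : PartialMartingale} {σ : List Bool} (h : (m.toFun σ).Dom) :
    mval m σ ∈ m.toFun σ := by
  rw [mval, dif_pos h]; exact Part.get_mem h

lemma mval_eq {m : PartialMartingale} {σ : List Bool} {q : ℚ} (h : q ∈ m.toFun σ) :
    mval m σ = q :=
  Part.mem_unique (mval_mem (Part.dom_iff_mem.mpr ⟨q, h⟩)) h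

lemma mval_nonneg (m : PartialMartingale) (σ : List Bool) : 0 ≤ mval m σ := by
  rw [mval]
  split
  · exact m.nonneg σ _ (Part.get_mem _)
  · exact le_refl 0

/-- stage-free convergence time -/
noncomputable def cstN (c : Code) (e : ℕ) : ℕ :=
  if h : ∃ t, convB c t e = true then Nat.find h else 0

lemma cstN_le {c : Code} {s e : ℕ} (h : convB c s e = true) : cstN c e ≤ s := by
  rw [cstN, dif_pos ⟨s, h⟩]
  exact Nat.find_min' _ h

lemma cstN_conv {c : Code} {s e : ℕ} (h : convB c s e = true) :
    convB c (cstN c e) e = true := by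
  rw [cstN, dif_pos ⟨s, h⟩]
  exact Nat.find_spec (⟨s, h⟩ : ∃ t, convB c t e = true)

lemma cstg_eq_cstN {c : Code} {s e : ℕ} (h : convB c s e = true) :
    cstg c s e = cstN c e := by
  obtain ⟨-, hp, hj⟩ := cstg_spec h
  have h1 : cstN c e ≤ cstg c s e := cstN_le hp
  rcases Nat.lt_or_ge (cstN c e) (cstg c s e) with hlt | hge
  · exact absurd (cstN_conv h) (by simp [hj _ hlt])
  · exact le_antisymm hge h1

/-- candidate predicate -/
def CandP (c : Code) (s : ℕ) (σ τ : List Bool) : Prop :=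
  σ <+: τ ∧ convB c s (Encodable.encode τ) = true

lemma CandP_mono {c : Code} {s s' : ℕ} {σ τ : List Bool} (h : s ≤ s')
    (hc : CandP c s σ τ) : CandP c s' σ τ :=
  ⟨hc.1, convB_mono h hc.2⟩

/-- the stage-free key of a candidate -/
noncomputable def keyf (m : PartialMartingale) (c : Code) (τ : List Bool) :
    ℚ ×ₗ (ℕ ×ₗ ℕ) :=
  toLex (mval m τ, toLex (cstN c (Encodable.encode τ), Encodable.encode τ))

lemma keyf_inj {m : PartialMartingale} {c : Code} {τ τ' : List Bool}
    (h : keyf m c τ = keyf m c τ') : τ = τ' := by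
  rw [keyf, keyf, toLex_inj, Prod.mk.injEq, toLex_inj, Prod.mk.injEq] at h
  exact Encodable.encode_injective h.2.2

variable {m : PartialMartingale} {c : Code}

lemma conv_dom (hev : ∀ σ : List Bool, eval c (Encodable.encode σ) = (m.toFun σ).map qenc)
    {s : ℕ} {σ : List Bool} (h : convB c s (Encodable.encode σ) = true) :
    (m.toFun σ).Dom ∧ vcode c s (Encodable.encode σ) = qenc (mval m σ) := by
  rw [convB, Bool.and_eq_true, Option.isSome_iff_exists] at h
  obtain ⟨-, x, hx⟩ := h
  have hx' : x ∈ eval c (Encodable.encode σ) := evaln_sound (by rw [hx]; rfl)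
  rw [hev σ, Part.mem_map_iff] at hx'
  obtain ⟨q, hq, hqx⟩ := hx'
  refine ⟨Part.dom_iff_mem.mpr ⟨q, hq⟩, ?_⟩
  rw [vcode, hx, Option.getD_some, ← hqx, mval_eq hq]

lemma dom_conv (hev : ∀ σ : List Bool, eval c (Encodable.encode σ) = (m.toFun σ).map qenc)
    {σ : List Bool} (h : (m.toFun σ).Dom) :
    ∃ s, convB c s (Encodable.encode σ) = true := by
  have hq : mval m σ ∈ m.toFun σ := mval_mem h
  have : qenc (mval m σ) ∈ eval c (Encodable.encode σ) := by
    rw [hev σ, Part.mem_map_iff]; exact ⟨_, hq, rfl⟩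
  obtain ⟨k, hk⟩ := evaln_complete.1 this
  refine ⟨max k (Encodable.encode σ), ?_⟩
  rw [convB, Bool.and_eq_true, decide_eq_true_iff, Option.isSome_iff_exists]
  exact ⟨le_max_right _ _, _, evaln_mono (le_max_left _ _) hk⟩

end Construction

section Construction2

open Encodable Nat.Partrec.Code
open Nat.Partrec (Code)

variable {m : PartialMartingale} {c : Code}

/-- the boolean comparison in `stepF` decides the key order. -/
lemma cond_iff (hev : ∀ σ : List Bool, eval c (Encodable.encode σ) = (m.toFun σ).map qenc)
    {s : ℕ} {σ τ ℓ : List Bool} (hτ : CandP c s σ τ) (hℓ : CandP c s σ ℓ) :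
    (rltN (vcode c s (Encodable.encode τ)) (vcode c s (Encodable.encode ℓ)) ||
      (vcode c s (Encodable.encode τ) == vcode c s (Encodable.encode ℓ) &&
        (decide (cstg c s (Encodable.encode τ) < cstg c s (Encodable.encode ℓ)) ||
          (cstg c s (Encodable.encode τ) == cstg c s (Encodable.encode ℓ) &&
            decide (Encodable.encode τ < Encodable.encode ℓ))))) = true
    ↔ keyf m c τ < keyf m c ℓ := by
  obtain ⟨hdτ, hvτ⟩ := conv_dom hev hτ.2
  obtain ⟨hdℓ, hvℓ⟩ := conv_dom hev hℓ.2
  rw [keyf, keyf]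
  simp only [Prod.Lex.lt_iff, Bool.or_eq_true, Bool.and_eq_true, beq_iff_eq,
    decide_eq_true_eq, toLex_inj]
  rw [hvτ, hvℓ, rltN_qenc (mval_nonneg m τ) (mval_nonneg m ℓ),
    cstg_eq_cstN hτ.2, cstg_eq_cstN hℓ.2]
  constructor
  · rintro (h | ⟨h1, h2 | ⟨h2, h3⟩⟩)
    · exact Or.inl h
    · exact Or.inr ⟨qenc_inj h1, Or.inl h2⟩
    · exact Or.inr ⟨qenc_inj h1, Or.inr ⟨h2, h3⟩⟩
  · rintro (h | ⟨h1, h2 | ⟨h2, h3⟩⟩)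
    · exact Or.inl h
    · exact Or.inr ⟨congrArg qenc h1, Or.inl h2⟩
    · exact Or.inr ⟨congrArg qenc h1, Or.inr ⟨h2, h3⟩⟩

/-- invariant of the fold state -/
def InvS (m : PartialMartingale) (c : Code) (s : ℕ) (σ : List Bool)
    (st : List Bool × ℕ × ℕ) : Prop :=
  CandP c s σ st.1 ∧ st.2.1 = vcode c s (Encodable.encode st.1) ∧
    st.2.2 = cstg c s (Encodable.encode st.1)

lemma fold_spec (hev : ∀ σ : List Bool, eval c (Encodable.encode σ) = (m.toFun σ).map qenc)
    {s : ℕ} {σ : List Bool} :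
    ∀ (l : List ℕ) (st : List Bool × ℕ × ℕ), InvS m c s σ st →
      InvS m c s σ (l.foldl (stepF c s σ) st) ∧
      keyf m c (l.foldl (stepF c s σ) st).1 ≤ keyf m c st.1 ∧
      ∀ τ : List Bool, Encodable.encode τ ∈ l → CandP c s σ τ →
        keyf m c (l.foldl (stepF c s σ) st).1 ≤ keyf m c τ := by
  intro l
  induction l with
  | nil => intro st h; exact ⟨h, le_refl _, by simp⟩
  | cons i l ih =>
    intro st h
    rw [List.foldl_cons]
    have key3 : InvS m c s σ (stepF c s σ st i) ∧
        keyf m c (stepF c s σ st i).1 ≤ keyf m c st.1 ∧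
        ∀ τ : List Bool, Encodable.encode τ = i → CandP c s σ τ →
          keyf m c (stepF c s σ st i).1 ≤ keyf m c τ := by
      obtain ⟨hc1, hc21, hc22⟩ := h
      rcases hdec : (Encodable.decode i : Option (List Bool)) with - | τ'
      · simp only [stepF, hdec]
        refine ⟨⟨hc1, hc21, hc22⟩, le_refl _, fun τ hτi _ => ?_⟩
        rw [← hτi, Encodable.encodek] at hdec
        exact absurd hdec (by simp)
      · simp only [stepF, hdec]
        cases hpc : prefB σ τ' && convB c s (Encodable.encode τ') with
        | false =>
          simp only [hpc, cond_false]
          refine ⟨⟨hc1, hc21, hc22⟩, le_refl _, fun τ hτi hcand => ?_⟩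
          rw [← hτi, Encodable.encodek] at hdec
          have hττ' : τ' = τ := by injection hdec with h'; exact h'.symm
          subst hττ'
          rw [Bool.and_eq_false_iff] at hpc
          rcases hpc with h' | h'
          · exact absurd ((prefB_iff _ _).2 hcand.1) (by simp [h'])
          · exact absurd hcand.2 (by simp [h'])
        | true =>
          have hcand' : CandP c s σ τ' := by
            rw [Bool.and_eq_true, prefB_iff] at hpc
            exact ⟨hpc.1, hpc.2⟩
          simp only [hpc, cond_true]
          rw [hc21, hc22]
          have hiff := cond_iff hev hcand' hc1
          cases hb : (rltN (vcode c s (Encodable.encode τ')) (vcode c s (Encodable.encode st.1)) ||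
            (vcode c s (Encodable.encode τ') == vcode c s (Encodable.encode st.1) &&
              (decide (cstg c s (Encodable.encode τ') < cstg c s (Encodable.encode st.1)) ||
                (cstg c s (Encodable.encode τ') == cstg c s (Encodable.encode st.1) &&
                  decide (Encodable.encode τ' < Encodable.encode st.1))))) with
          | false =>
            simp only [hb, cond_false]
            have hnlt : ¬ keyf m c τ' < keyf m c st.1 := by
              rw [← hiff, hb]; simp
            refine ⟨⟨hc1, hc21, hc22⟩, le_refl _, fun τ hτi hcand => ?_⟩
            rw [← hτi, Encodable.encodek] at hdec
            have hττ' : τ' = τ := by injection hdec with h'; exact h'.symm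
            subst hττ'
            exact not_lt.1 hnlt
          | true =>
            simp only [hb, cond_true]
            have hlt : keyf m c τ' < keyf m c st.1 := hiff.1 hb
            refine ⟨⟨hcand', rfl, rfl⟩, le_of_lt hlt, fun τ hτi hcand => ?_⟩
            rw [← hτi, Encodable.encodek] at hdec
            have hττ' : τ' = τ := by injection hdec with h'; exact h'.symm
            subst hττ'
            exact le_refl _
    obtain ⟨hA, hB, hC⟩ := key3
    obtain ⟨I1, I2, I3⟩ := ih _ hA
    refine ⟨I1, I2.trans hB, fun τ hmem hcand => ?_⟩
    rcases List.mem_cons.1 hmem with he | hl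
    · exact I2.trans (hC τ he hcand)
    · exact I3 τ hl hcand

lemma Fapp_conv (hev : ∀ σ : List Bool, eval c (Encodable.encode σ) = (m.toFun σ).map qenc)
    {s : ℕ} {σ : List Bool} (hσc : convB c s (Encodable.encode σ) = true) :
    CandP c s σ (Fapp c s σ) ∧
      ∀ τ : List Bool, CandP c s σ τ → keyf m c (Fapp c s σ) ≤ keyf m c τ := by
  have hInv0 : InvS m c s σ (σ, vcode c s (Encodable.encode σ), cstg c s (Encodable.encode σ)) :=
    ⟨⟨List.prefix_refl σ, hσc⟩, rfl, rfl⟩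
  obtain ⟨I1, -, I3⟩ := fold_spec hev (List.range (s + 1)) _ hInv0
  have hF : Fapp c s σ =
      ((List.range (s + 1)).foldl (stepF c s σ)
        (σ, vcode c s (Encodable.encode σ), cstg c s (Encodable.encode σ))).1 := by
    rw [Fapp, hσc, cond_true]
  refine ⟨by rw [hF]; exact I1.1, fun τ hτ => ?_⟩
  rw [hF]
  refine I3 τ ?_ hτ
  have : Encodable.encode τ ≤ s := by
    have h2 := hτ.2
    rw [convB, Bool.and_eq_true, decide_eq_true_eq] at h2
    exact h2.1
  exact List.mem_range.2 (Nat.lt_succ_of_le this)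

lemma Fapp_none {c : Code} {s : ℕ} {σ : List Bool}
    (h : convB c s (Encodable.encode σ) = false) : Fapp c s σ = σ := by
  rw [Fapp, h, cond_false]

end Construction2

section Construction3

open Encodable Nat.Partrec.Code
open Nat.Partrec (Code)

variable {m : PartialMartingale} {c : Code}

lemma stab_helper (a : ℕ → ℕ) (N : ℕ) (h : ∀ s, N ≤ s → a (s + 1) ≤ a s) :
    ∃ M, N ≤ M ∧ ∀ s, M ≤ s → a s = a M := by
  have mono : ∀ s s', N ≤ s → s ≤ s' → a s' ≤ a s := by
    intro s s' hNs hss'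
    induction s', hss' using Nat.le_induction with
    | base => exact le_refl _
    | succ n hn ih => exact (h n (hNs.trans hn)).trans ih
  have hex : ∃ v, ∃ s, N ≤ s ∧ a s = v := ⟨a N, N, le_rfl, rfl⟩
  classical
  obtain ⟨s1, hs1N, hs1⟩ := Nat.find_spec hex
  refine ⟨s1, hs1N, fun s hs => le_antisymm (mono s1 s hs1N hs) ?_⟩
  rw [hs1]
  exact Nat.find_min' hex ⟨s, hs1N.trans hs, rfl⟩

lemma mval_sub_int {hIV : m.IntegerValued} {σ τ τ' : List Bool}
    (h : σ <+: τ) (h' : σ <+: τ') (hd : (m.toFun σ).Dom) (hdτ : (m.toFun τ).Dom)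
    (hdτ' : (m.toFun τ').Dom) : ∃ z : ℤ, mval m τ' = mval m τ + z := by
  obtain ⟨l, hl⟩ := h
  obtain ⟨l', hl'⟩ := h'
  obtain ⟨z, hz⟩ := pm_int_diff hIV l σ _ _ (mval_mem hd) (by rw [hl]; exact mval_mem hdτ)
  obtain ⟨z', hz'⟩ := pm_int_diff hIV l' σ _ _ (mval_mem hd) (by rw [hl']; exact mval_mem hdτ')
  exact ⟨z' - z, by rw [hz', hz]; push_cast; ring⟩

lemma floor_strict {q q' : ℚ} (h0 : 0 ≤ q') (hz : ∃ z : ℤ, q' = q + z) (hlt : q' < q) :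
    ⌊q'⌋₊ < ⌊q⌋₊ := by
  obtain ⟨z, hzz⟩ := hz
  have hzneg : z < 0 := by
    by_contra hc
    push_neg at hc
    have : (0 : ℚ) ≤ (z : ℚ) := by exact_mod_cast hc
    linarith
  have h1 : q' + 1 ≤ q := by
    have : (z : ℚ) ≤ -1 := by exact_mod_cast (by omega : z ≤ -1)
    linarith
  have : (⌊q'⌋₊ + 1 : ℚ) ≤ q := by
    have := Nat.floor_le h0
    linarith
  have h2 : (⌊q'⌋₊ + 1 : ℕ) ≤ ⌊q⌋₊ := Nat.le_floor (by exact_mod_cast this)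
  omega

/-- per-step key monotonicity -/
lemma key_step (hev : ∀ σ : List Bool, eval c (Encodable.encode σ) = (m.toFun σ).map qenc)
    {s : ℕ} {σ : List Bool} (hσc : convB c s (Encodable.encode σ) = true) :
    keyf m c (Fapp c (s + 1) σ) ≤ keyf m c (Fapp c s σ) := by
  have hσc' : convB c (s + 1) (Encodable.encode σ) = true := convB_mono (Nat.le_succ s) hσc
  exact (Fapp_conv hev hσc').2 _ (CandP_mono (Nat.le_succ s) (Fapp_conv hev (m := m) hσc).1)

/-- key monotonicity over guard region -/
lemma key_mono (hev : ∀ σ : List Bool, eval c (Encodable.encode σ) = (m.toFun σ).map qenc)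
    {s s' : ℕ} {σ : List Bool} (hσc : convB c s (Encodable.encode σ) = true) (h : s ≤ s') :
    keyf m c (Fapp c s' σ) ≤ keyf m c (Fapp c s σ) := by
  induction s', h using Nat.le_induction with
  | base => exact le_refl _
  | succ n hn ih => exact (key_step hev (convB_mono hn hσc)).trans ih

lemma keyf_fst_le {τ τ' : List Bool} (h : keyf m c τ ≤ keyf m c τ') :
    mval m τ ≤ mval m τ' := by
  rw [keyf, keyf, Prod.Lex.le_iff] at h
  rcases h with h | ⟨h, -⟩
  · exact le_of_lt h
  · exact le_of_eq h

/-- stabilization of the approximation -/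
lemma Fapp_stab (hev : ∀ σ : List Bool, eval c (Encodable.encode σ) = (m.toFun σ).map qenc)
    (hIV : m.IntegerValued) (σ : List Bool) :
    ∃ s₀, ∀ s, s₀ ≤ s → Fapp c s σ = Fapp c s₀ σ := by
  by_cases hg : ∃ t, convB c t (Encodable.encode σ) = true
  · obtain ⟨sg, hsg⟩ := hg
    have hgs : ∀ s, sg ≤ s → convB c s (Encodable.encode σ) = true :=
      fun s hs => convB_mono hs hsg
    have hσd : (m.toFun σ).Dom := (conv_dom hev hsg).1
    have hcand : ∀ s, sg ≤ s → CandP c s σ (Fapp c s σ) :=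
      fun s hs => (Fapp_conv hev (hgs s hs)).1
    have hdom : ∀ s, sg ≤ s → (m.toFun (Fapp c s σ)).Dom :=
      fun s hs => (conv_dom hev (hcand s hs).2).1
    have hstep : ∀ s, sg ≤ s → keyf m c (Fapp c (s + 1) σ) ≤ keyf m c (Fapp c s σ) :=
      fun s hs => key_step hev (hgs s hs)
    -- first component: the floor of the value stabilizes
    have h1 : ∀ s, sg ≤ s → ⌊mval m (Fapp c (s + 1) σ)⌋₊ ≤ ⌊mval m (Fapp c s σ)⌋₊ :=
      fun s hs => Nat.floor_le_floor (keyf_fst_le (hstep s hs))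
    obtain ⟨M1, hM1sg, hM1⟩ := stab_helper (fun s => ⌊mval m (Fapp c s σ)⌋₊) sg h1
    -- value is constant from M1 on
    have hqconst : ∀ s, M1 ≤ s → mval m (Fapp c s σ) = mval m (Fapp c M1 σ) := by
      intro s hs
      have hle : mval m (Fapp c s σ) ≤ mval m (Fapp c M1 σ) :=
        keyf_fst_le (key_mono hev (hgs M1 hM1sg) hs)
      rcases eq_or_lt_of_le hle with h | h
      · exact h
      · exfalso
        have hfl : ⌊mval m (Fapp c s σ)⌋₊ < ⌊mval m (Fapp c M1 σ)⌋₊ := by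
          refine floor_strict (mval_nonneg m _) ?_ h
          exact mval_sub_int (hIV := hIV) (hcand M1 hM1sg).1 (hcand s (hM1sg.trans hs)).1 hσd
            (hdom M1 hM1sg) (hdom s (hM1sg.trans hs))
        rw [hM1 s hs] at hfl
        omega
    -- second component stabilizes
    have h2 : ∀ s, M1 ≤ s → cstN c (Encodable.encode (Fapp c (s + 1) σ)) ≤
        cstN c (Encodable.encode (Fapp c s σ)) := by
      intro s hs
      have hk := hstep s (hM1sg.trans hs)
      rw [keyf, keyf, Prod.Lex.le_iff] at hk
      rcases hk with h | ⟨-, h⟩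
      · exfalso
        rw [hqconst (s+1) (hs.trans (Nat.le_succ s)), ← hqconst s hs] at h
        exact lt_irrefl _ h
      · rw [Prod.Lex.le_iff] at h
        rcases h with h | ⟨h, -⟩
        · exact le_of_lt h
        · exact le_of_eq h
    obtain ⟨M2, hM2M1, hM2⟩ := stab_helper (fun s => cstN c (Encodable.encode (Fapp c s σ))) M1 h2
    -- third component stabilizes
    have h3 : ∀ s, M2 ≤ s → Encodable.encode (Fapp c (s + 1) σ) ≤
        Encodable.encode (Fapp c s σ) := by
      intro s hs
      have hk := hstep s (hM1sg.trans (hM2M1.trans hs))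
      rw [keyf, keyf, Prod.Lex.le_iff] at hk
      rcases hk with h | ⟨-, h⟩
      · exfalso
        rw [hqconst (s+1) ((hM2M1.trans hs).trans (Nat.le_succ s)), ← hqconst s (hM2M1.trans hs)]
          at h
        exact lt_irrefl _ h
      · rw [Prod.Lex.le_iff] at h
        rcases h with h | ⟨-, h⟩
        · exfalso
          have e1 := hM2 s hs
          have e2 := hM2 (s + 1) (hs.trans (Nat.le_succ s))
          change cstN c (Encodable.encode (Fapp c (s + 1) σ)) <
            cstN c (Encodable.encode (Fapp c s σ)) at h
          omega
        · exact h
    obtain ⟨M3, hM3M2, hM3⟩ := stab_helper (fun s => Encodable.encode (Fapp c s σ)) M2 h3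
    refine ⟨M3, fun s hs => Encodable.encode_injective ?_⟩
    rw [hM3 s hs]
  · push_neg at hg
    refine ⟨0, fun s _ => ?_⟩
    rw [Fapp_none (Bool.not_eq_true _ ▸ hg s : convB c s (Encodable.encode σ) = false),
      Fapp_none (Bool.not_eq_true _ ▸ hg 0 : convB c 0 (Encodable.encode σ) = false)]

end Construction3

section Construction4

open Encodable Nat.Partrec.Code
open Nat.Partrec (Code)

variable {m : PartialMartingale} {c : Code}

/-- bound on the number of mind changes -/
lemma Fapp_mind (hev : ∀ σ : List Bool, eval c (Encodable.encode σ) = (m.toFun σ).map qenc)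
    (hIV : m.IntegerValued) (σ : List Bool) :
    {s : ℕ | Fapp c (s + 1) σ ≠ Fapp c s σ}.Finite ∧
    {s : ℕ | Fapp c (s + 1) σ ≠ Fapp c s σ}.ncard ≤ (⌊mval m []⌋₊ + 1) * 2 ^ σ.length + 2 := by
  by_cases hg : ∃ t, convB c t (Encodable.encode σ) = true
  case neg =>
    push_neg at hg
    have hempty : {s : ℕ | Fapp c (s + 1) σ ≠ Fapp c s σ} = ∅ := by
      ext s
      simp only [Set.mem_setOf_eq, Set.mem_empty_iff_false, iff_false, not_not]
      rw [Fapp_none (Bool.not_eq_true _ ▸ hg (s+1) : convB c (s+1) (Encodable.encode σ) = false),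
        Fapp_none (Bool.not_eq_true _ ▸ hg s : convB c s (Encodable.encode σ) = false)]
    rw [hempty]
    simp
  case pos =>
    obtain ⟨sg, hsg⟩ := hg
    set B := (⌊mval m []⌋₊ + 1) * 2 ^ σ.length with hB
    have hσd : (m.toFun σ).Dom := (conv_dom hev hsg).1
    have h0d : (m.toFun []).Dom := m.domClosed [] σ List.nil_prefix hσd
    have hq0 : mval m [] ∈ m.toFun [] := mval_mem h0d
    have hfloorB : ⌊mval m σ⌋₊ < B := by
      have h1 : mval m σ ≤ 2 ^ σ.length * mval m [] := pm_bound hq0 σ _ (mval_mem hσd)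
      have h2 : mval m [] < (⌊mval m []⌋₊ : ℚ) + 1 := Nat.lt_floor_add_one _
      have h3 : mval m σ < ((B : ℕ) : ℚ) := by
        rw [hB]
        push_cast
        have hp : (0:ℚ) < 2 ^ σ.length := by positivity
        nlinarith
      exact Nat.floor_lt (mval_nonneg m σ) |>.2 h3
    set D := {s : ℕ | Fapp c (s + 1) σ ≠ Fapp c s σ} with hD
    set D1 := {s : ℕ | convB c s (Encodable.encode σ) = false ∧
      convB c (s+1) (Encodable.encode σ) = true} with hD1
    set D2 := {s : ℕ | Fapp c (s + 1) σ ≠ Fapp c s σ ∧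
      convB c s (Encodable.encode σ) = true} with hD2
    have hsub : D ⊆ D1 ∪ D2 := by
      intro s hs
      cases h1 : convB c s (Encodable.encode σ) with
      | true => exact Or.inr ⟨hs, h1⟩
      | false =>
        cases h2 : convB c (s+1) (Encodable.encode σ) with
        | true => exact Or.inl ⟨h1, h2⟩
        | false => exact absurd (by rw [Fapp_none h1, Fapp_none h2]) hs
    have hD1sub : D1.Subsingleton := by
      intro a ha b hb
      by_contra hne
      rcases Nat.lt_or_ge a b with h | h
      · exact absurd (convB_mono (by omega : a + 1 ≤ b) ha.2) (by simp [hb.1])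
      · rcases Nat.lt_or_ge b a with h' | h'
        · exact absurd (convB_mono (by omega : b + 1 ≤ a) hb.2) (by simp [ha.1])
        · exact hne (le_antisymm h' h)
    -- strict decrease of the value floor on D2
    have hstrict : ∀ s ∈ D2, ⌊mval m (Fapp c (s+1) σ)⌋₊ < ⌊mval m (Fapp c s σ)⌋₊ := by
      intro s hs
      obtain ⟨hne, hgs⟩ := hs
      have hgs1 : convB c (s+1) (Encodable.encode σ) = true := convB_mono (Nat.le_succ s) hgs
      have hcs : CandP c s σ (Fapp c s σ) := (Fapp_conv hev (m := m) hgs).1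
      have hcs1 : CandP c (s+1) σ (Fapp c (s+1) σ) := (Fapp_conv hev (m := m) hgs1).1
      have hkle : keyf m c (Fapp c (s+1) σ) ≤ keyf m c (Fapp c s σ) := key_step hev hgs
      have hkne : keyf m c (Fapp c (s+1) σ) ≠ keyf m c (Fapp c s σ) :=
        fun h => hne (keyf_inj h)
      have hklt := lt_of_le_of_ne hkle hkne
      rw [keyf, keyf, Prod.Lex.lt_iff] at hklt
      rcases hklt with h | ⟨heq, hsnd⟩
      · refine floor_strict (mval_nonneg m _) ?_ h
        exact mval_sub_int (hIV := hIV) hcs.1 hcs1.1 hσd (conv_dom hev hcs.2).1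
          (conv_dom hev hcs1.2).1
      · exfalso
        have hcstle : cstN c (Encodable.encode (Fapp c (s+1) σ)) ≤
            cstN c (Encodable.encode (Fapp c s σ)) := by
          rw [Prod.Lex.lt_iff] at hsnd
          rcases hsnd with h | ⟨h, -⟩
          · exact le_of_lt h
          · exact le_of_eq h
        have hc1 : convB c (cstN c (Encodable.encode (Fapp c (s+1) σ)))
            (Encodable.encode (Fapp c (s+1) σ)) = true := cstN_conv hcs1.2
        have hle_s : cstN c (Encodable.encode (Fapp c s σ)) ≤ s := cstN_le hcs.2
        have hconv_s : convB c s (Encodable.encode (Fapp c (s+1) σ)) = true :=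
          convB_mono (hcstle.trans hle_s) hc1
        have hcand_s : CandP c s σ (Fapp c (s+1) σ) := ⟨hcs1.1, hconv_s⟩
        have hmin := (Fapp_conv hev (m := m) hgs).2 _ hcand_s
        have : keyf m c (Fapp c (s+1) σ) = keyf m c (Fapp c s σ) :=
          le_antisymm hkle hmin
        exact hkne this
    -- monotonicity of the floors over the guard region
    have hmono : ∀ s s', convB c s (Encodable.encode σ) = true → s ≤ s' →
        ⌊mval m (Fapp c s' σ)⌋₊ ≤ ⌊mval m (Fapp c s σ)⌋₊ :=
      fun s s' h1 h2 => Nat.floor_le_floor (keyf_fst_le (key_mono hev h1 h2))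
    set φ : ℕ → ℕ := fun s => ⌊mval m (Fapp c (s+1) σ)⌋₊ with hφ
    have hinj : Set.InjOn φ D2 := by
      intro a ha b hb hab
      by_contra hne
      rcases Nat.lt_or_ge a b with h | h
      · have h1 : φ b < ⌊mval m (Fapp c b σ)⌋₊ := hstrict b hb
        have h2 : ⌊mval m (Fapp c b σ)⌋₊ ≤ φ a :=
          hmono (a+1) b (convB_mono (Nat.le_succ a) ha.2) (by omega)
        omega
      · rcases Nat.lt_or_ge b a with h' | h'
        · have h1 : φ a < ⌊mval m (Fapp c a σ)⌋₊ := hstrict a ha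
          have h2 : ⌊mval m (Fapp c a σ)⌋₊ ≤ φ b :=
            hmono (b+1) a (convB_mono (Nat.le_succ b) hb.2) (by omega)
          omega
        · exact hne (le_antisymm h' h)
    have himg : φ '' D2 ⊆ ↑(Finset.range B) := by
      rintro - ⟨s, hs, rfl⟩
      have hgs1 : convB c (s+1) (Encodable.encode σ) = true := convB_mono (Nat.le_succ s) hs.2
      have hσcand : CandP c (s+1) σ σ := ⟨List.prefix_refl σ, hgs1⟩
      have hmin := (Fapp_conv hev (m := m) hgs1).2 σ hσcand
      have h1 : mval m (Fapp c (s+1) σ) ≤ mval m σ := keyf_fst_le hmin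
      have h2 : φ s ≤ ⌊mval m σ⌋₊ := Nat.floor_le_floor h1
      simp only [Finset.coe_range, Set.mem_Iio]
      omega
    have hD2fin : D2.Finite :=
      Set.Finite.of_finite_image (Set.Finite.subset (Finset.range B).finite_toSet himg) hinj
    have hD2card : D2.ncard ≤ B := by
      rw [← Set.ncard_image_of_injOn hinj]
      calc (φ '' D2).ncard ≤ (↑(Finset.range B) : Set ℕ).ncard :=
            Set.ncard_le_ncard himg (Finset.range B).finite_toSet
        _ = B := by rw [Set.ncard_coe_finset, Finset.card_range]
    have hDfin : D.Finite := Set.Finite.subset (hD1sub.finite.union hD2fin) hsub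
    refine ⟨hDfin, ?_⟩
    have hD1card : D1.ncard ≤ 1 := by
      rcases hD1sub.eq_empty_or_singleton with h | ⟨x, h⟩
      · rw [h]; simp
      · rw [h]; simp
    calc D.ncard ≤ (D1 ∪ D2).ncard :=
          Set.ncard_le_ncard hsub (hD1sub.finite.union hD2fin)
      _ ≤ D1.ncard + D2.ncard := Set.ncard_union_le _ _
      _ ≤ 1 + B := add_le_add hD1card hD2card
      _ ≤ B + 2 := by omega

lemma two_pow_iterate (n : ℕ) : (fun x : ℕ => 2 * x)^[n] 1 = 2 ^ n := by
  induction n with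
  | zero => simp
  | succ n ih => rw [Function.iterate_succ_apply', ih, pow_succ]; ring

lemma primrec_hbound (C : ℕ) : Primrec fun σ : List Bool => (C + 1) * 2 ^ σ.length + 2 := by
  have hpow : Primrec fun σ : List Bool => 2 ^ σ.length := by
    have := Primrec.nat_iterate (f := fun σ : List Bool => σ.length)
      (g := fun _ : List Bool => (1:ℕ)) (h := fun _ x => 2 * x)
      Primrec.list_length (Primrec.const 1) (Primrec.nat_double.comp Primrec.snd).to₂
    exact this.of_eq fun σ => two_pow_iterate σ.length
  exact Primrec.nat_add.comp
    (Primrec.nat_mul.comp (Primrec.const (C + 1)) hpow) (Primrec.const 2)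

end Construction4

section FinalAssembly

open Encodable Nat.Partrec.Code
open Nat.Partrec (Code)

lemma str_zero (X : ℕ → Bool) : str X 0 = [] := by simp [str]

lemma pbGeneric_partialIVRandom (X : ℕ → Bool) (hX : PbGeneric X) : PartialIVRandom X := by
  intro m hIV hComp hS
  -- extract a code for the martingale
  obtain ⟨c, hc⟩ := Nat.Partrec.Code.exists_code.1 hComp
  have hev : ∀ σ : List Bool, eval c (Encodable.encode σ) = (m.toFun σ).map qenc := by
    intro σ
    rw [hc]
    simp only [Encodable.encodek]
    rw [Part.coe_some, Part.bind_some, Part.map_map]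
    rfl
  -- the limit function
  have hstab := Fapp_stab hev hIV
  set f : List Bool → List Bool := fun σ => Fapp c (Classical.choose (hstab σ)) σ with hfdef
  have hflim : ∀ σ s, Classical.choose (hstab σ) ≤ s → Fapp c s σ = f σ :=
    fun σ s hs => Classical.choose_spec (hstab σ) s hs
  -- success gives domain along X
  have hdomX : ∀ n, (m.toFun (str X n)).Dom := by
    intro n
    obtain ⟨n', hn', q, hq, -⟩ := hS 0 n
    exact m.domClosed _ _ (str_prefix X hn') (Part.dom_iff_mem.mpr ⟨q, hq⟩)
  have hdom0 : (m.toFun []).Dom := by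
    have := hdomX 0
    rwa [str_zero] at this
  -- limit properties
  have hfP : ∀ σ : List Bool, σ <+: f σ ∧ ((m.toFun σ).Dom →
      (m.toFun (f σ)).Dom ∧
        ∀ ρ, f σ <+: ρ → (m.toFun ρ).Dom → mval m (f σ) ≤ mval m ρ) := by
    intro σ
    by_cases hd : (m.toFun σ).Dom
    · obtain ⟨s1, hs1⟩ := dom_conv hev hd
      set s₀ := Classical.choose (hstab σ) with hs₀
      have hg2 : convB c (max s₀ s1) (Encodable.encode σ) = true :=
        convB_mono (le_max_right _ _) hs1
      have hf2 : Fapp c (max s₀ s1) σ = f σ := hflim σ _ (le_max_left _ _)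
      have hcand := (Fapp_conv hev (m := m) hg2).1
      refine ⟨by rw [← hf2]; exact hcand.1,
        fun _ => ⟨by rw [← hf2]; exact (conv_dom hev hcand.2).1, ?_⟩⟩
      intro ρ hρ hρd
      obtain ⟨s3, hs3⟩ := dom_conv hev hρd
      have hg4 : convB c (max (max s₀ s1) s3) (Encodable.encode σ) = true :=
        convB_mono (le_max_left _ _) hg2
      have hf4 : Fapp c (max (max s₀ s1) s3) σ = f σ :=
        hflim σ _ ((le_max_left s₀ s1).trans (le_max_left _ _))
      have hρcand : CandP c (max (max s₀ s1) s3) σ ρ := by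
        refine ⟨?_, convB_mono (le_max_right _ _) hs3⟩
        calc σ <+: f σ := by rw [← hf2]; exact hcand.1
          _ <+: ρ := hρ
      have hmin := (Fapp_conv hev (m := m) hg4).2 ρ hρcand
      rw [hf4] at hmin
      exact keyf_fst_le hmin
    · have hall : ∀ s, Fapp c s σ = σ := by
        intro s
        refine Fapp_none ?_
        cases h : convB c s (Encodable.encode σ) with
        | true => exact absurd (conv_dom hev h).1 hd
        | false => rfl
      constructor
      · show σ <+: Fapp c (Classical.choose (hstab σ)) σ
        rw [hall]
      · exact fun hd' => absurd hd' hd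
  -- the pb-dense set of strings
  have hSd : PbDense (Set.range f) := by
    refine ⟨f, Fapp c, fun σ => (⌊mval m []⌋₊ + 1) * 2 ^ σ.length + 2,
      (primrec_Fapp c).to_comp, primrec_hbound _, fun σ => (hfP σ).1,
      fun σ => ⟨Classical.choose (hstab σ), fun s hs => hflim σ s hs⟩,
      fun σ => ?_, fun σ => ⟨σ, rfl⟩⟩
    have h1 := Fapp_mind hev hIV σ
    have h2 : {s : ℕ | Fapp c (s + 1) σ ≠ Fapp c s σ} =
        {s : ℕ | (fun s σ => Fapp c s σ) (s + 1) σ ≠ (fun s σ => Fapp c s σ) s σ} := rfl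
    exact ⟨h2 ▸ h1.1, h2 ▸ h1.2⟩
  obtain ⟨n, σ0, hσ0⟩ := hX (Set.range f) hSd
  -- domain facts
  have hdn : (m.toFun (str X n)).Dom := hdomX n
  have hσ0d : (m.toFun σ0).Dom := m.domClosed _ _ (hσ0 ▸ (hfP σ0).1) hdn
  obtain ⟨-, hmin⟩ := (hfP σ0).2 hσ0d
  rw [hσ0] at hmin
  -- the martingale is constant along X above n
  have hconst : ∀ j, n ≤ j → ∀ q, q ∈ m.toFun (str X j) → q = mval m (str X n) := by
    intro j hj
    induction j, hj using Nat.le_induction with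
    | base => intro q hq; exact (mval_eq hq).symm
    | succ j hnj ih =>
      intro q hq
      rw [str_succ] at hq
      have hdj1 : (m.toFun (str X j ++ [X j])).Dom := Part.dom_iff_mem.mpr ⟨q, hq⟩
      have hdj : (m.toFun (str X j)).Dom := m.domClosed _ _ (List.prefix_append _ _) hdj1
      have hvj : ∀ p ∈ m.toFun (str X j), p = mval m (str X n) := ih
      have hsib : (m.toFun (str X j ++ [!X j])).Dom := m.siblings _ _ hdj1
      have hqs : (m.toFun (str X j ++ [!X j])).get hsib ∈ m.toFun (str X j ++ [!X j]) :=
        Part.get_mem hsib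
      set qs := (m.toFun (str X j ++ [!X j])).get hsib with hqsdef
      have hext : ∀ b : Bool, str X n <+: str X j ++ [b] :=
        fun b => (str_prefix X hnj).trans (List.prefix_append _ _)
      have hminq : mval m (str X n) ≤ q := by
        have := hmin (str X j ++ [X j]) (hext (X j)) hdj1
        rwa [mval_eq hq] at this
      have hminqs : mval m (str X n) ≤ qs := by
        have := hmin (str X j ++ [!X j]) (hext (!X j)) hsib
        rwa [mval_eq hqs] at this
      have hfq : q + qs = 2 * mval m (str X n) := by
        cases hXj : X j with
        | false =>
          rw [hXj] at hq
          have hqs' : qs ∈ m.toFun (str X j ++ [true]) := by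
            rw [hXj] at hqs
            simpa using hqs
          have h2 := m.fair (str X j) q qs hq hqs'
          have h3 := hvj _ h2
          linarith [h3]
        | true =>
          rw [hXj] at hq
          have hqs' : qs ∈ m.toFun (str X j ++ [false]) := by
            rw [hXj] at hqs
            simpa using hqs
          have h2 := m.fair (str X j) qs q hqs' hq
          have h3 := hvj _ h2
          linarith [h3]
      linarith
  -- contradiction with success
  obtain ⟨n', hn', q, hq, hlt⟩ := hS (mval m (str X n)) n
  have heq := hconst n' hn' q hq
  rw [heq] at hlt
  exact lt_irrefl _ hlt

/-- a total martingale gives a partial one -/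
def toPartial (g : Martingale) : PartialMartingale where
  toFun := fun σ => Part.some (g.toFun σ)
  nonneg := fun σ q hq => by
    rw [Part.mem_some_iff] at hq
    rw [hq]
    exact g.nonneg σ
  domClosed := fun _ _ _ _ => trivial
  siblings := fun _ _ _ => trivial
  fair := fun σ q0 q1 h0 h1 => by
    rw [Part.mem_some_iff] at h0 h1
    rw [Part.mem_some_iff, h0, h1]
    exact (g.fair σ).symm

lemma pbGeneric_IVRandom (X : ℕ → Bool) (hX : PbGeneric X) : IVRandom X := by
  intro g hIV hComp hS
  refine pbGeneric_partialIVRandom X hX (toPartial g) ?_ ?_ ?_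
  · intro σ b q q' hq hq'
    rw [toPartial] at hq hq'
    rw [Part.mem_some_iff] at hq hq'
    obtain ⟨k, hk⟩ := hIV σ b
    exact ⟨k, by rw [hq, hq']; exact hk⟩
  · show Partrec fun σ => ((toPartial g).toFun σ).map qenc
    have h1 : Partrec fun (σ : List Bool) => Part.some (qenc (g.toFun σ)) := hComp
    exact h1.of_eq fun σ => by simp [toPartial, Part.map_some]
  · intro cq k
    obtain ⟨n, hn, hlt⟩ := hS cq k
    exact ⟨n, hn, g.toFun (str X n), Part.mem_some _, hlt⟩

end FinalAssembly

/-- Every pb-generic real is integer-valued random, and moreover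
partial integer-valued random. -/
theorem pbGeneric_is_IVRandom_and_PartialIVRandom (X : ℕ → Bool) (hX : PbGeneric X) :
    IVRandom X ∧ PartialIVRandom X :=
  ⟨pbGeneric_IVRandom X hX, pbGeneric_partialIVRandom X hX⟩

end IVR
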